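/- Let E be a real normed vector space and N a smooth (1,1) tensor field on E with vanishing Nijenhuis torsion, T(N) = 0. Let ρ be a bi-closed 1-form on E, i.e. both ρ and the pullback N*ρ : x ↦ ρ(x) ∘ N(x) are closed. Then for every positive integer k the 1-form (N*)^k ρ : x ↦ ρ(x) ∘ N(x)^k is closed; in particular every (N*)^k ρ is bi-closed. -/

import Mathlib

variable {E : Type*} [NormedAddCommGroup E] [NormedSpace ℝ E]

/-- Lie bracket of vector fields on `E`: `[X,Y](x) = DY(x)(X(x)) − DX(x)(Y(x))`. -/
noncomputable def lie (X Y : E → E) : E → E :=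
  fun x => fderiv ℝ Y x (X x) - fderiv ℝ X x (Y x)

/-- Pointwise action of a (1,1) tensor field on a vector field. -/
def app (N : E → E →L[ℝ] E) (X : E → E) : E → E := fun x => N x (X x)

/-- Pointwise `k`-th power of a (1,1) tensor field. -/
def pw (N : E → E →L[ℝ] E) (k : ℕ) : E → E →L[ℝ] E := fun x => (N x) ^ k

/-- Frölicher–Nijenhuis bracket of two (1,1) tensor fields, evaluated on vector fields. -/
noncomputable def fnBracket (N₁ N₂ : E → E →L[ℝ] E) (X Y : E → E) : E → E :=
  fun x =>
    N₁ x (N₂ x (lie X Y x)) + N₂ x (N₁ x (lie X Y x))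
      + lie (app N₁ X) (app N₂ Y) x + lie (app N₂ X) (app N₁ Y) x
      - N₁ x (lie (app N₂ X) Y x + lie X (app N₂ Y) x)
      - N₂ x (lie (app N₁ X) Y x + lie X (app N₁ Y) x)

/-- Nijenhuis torsion of a (1,1) tensor field, evaluated on vector fields. -/
noncomputable def tor (N : E → E →L[ℝ] E) (X Y : E → E) : E → E :=
  fun x =>
    lie (app N X) (app N Y) x
      + N x (N x (lie X Y x) - lie (app N X) Y x - lie X (app N Y) x)

/-- Haantjes tensor of a (1,1) tensor field, evaluated on vector fields. -/
noncomputable def haan (M : E → E →L[ℝ] E) (X Y : E → E) : E → E :=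
  fun x =>
    M x (M x (tor M X Y x)) + tor M (app M X) (app M Y) x
      - M x (tor M (app M X) Y x + tor M X (app M Y) x)

/-- The bracket `[A,B]_X = [AX,BX] − A[X,BX] + B[X,AX]` of two (1,1) tensor fields
with respect to a vector field `X`. -/
noncomputable def brX (A B : E → E →L[ℝ] E) (X : E → E) : E → E :=
  fun x =>
    lie (app A X) (app B X) x - A x (lie X (app B X) x) + B x (lie X (app A X) x)

/-- A 1-form is closed iff its Fréchet derivative is symmetric. -/
def IsClosedOneForm (ρ : E → E →L[ℝ] ℝ) : Prop :=
  ∀ x u v, fderiv ℝ ρ x u v = fderiv ℝ ρ x v u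

lemma fderiv_apply_const' {G : Type*} [NormedAddCommGroup G] [NormedSpace ℝ G]
    {F : E → E →L[ℝ] G} {x : E} (hF : DifferentiableAt ℝ F x) (v u : E) :
    fderiv ℝ (fun y => F y v) x u = fderiv ℝ F x u v := by
  rw [fderiv_clm_apply hF (differentiableAt_const v)]
  simp

lemma powCD (N : E → E →L[ℝ] E) (hN : ContDiff ℝ (⊤ : ℕ∞) N) (k : ℕ) :
    ContDiff ℝ (⊤ : ℕ∞) (fun y => (N y) ^ k) := by
  induction k with
  | zero => simpa using contDiff_const (c := (1 : E →L[ℝ] E))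
  | succ k ih =>
    have h : (fun y => (N y) ^ (k + 1)) = fun y => ((N y).comp ((N y) ^ k)) := by
      funext y; rw [pow_succ']; rfl
    rw [h]; exact hN.clm_comp ih

lemma powvCD (N : E → E →L[ℝ] E) (hN : ContDiff ℝ (⊤ : ℕ∞) N) (k : ℕ) (v : E) :
    ContDiff ℝ (⊤ : ℕ∞) (fun y => ((N y) ^ k) v) :=
  (powCD N hN k).clm_apply contDiff_const

lemma fderiv_pow_succ (N : E → E →L[ℝ] E) (hN : ContDiff ℝ (⊤ : ℕ∞) N)
    (k : ℕ) (x u v : E) :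
    fderiv ℝ (fun y => ((N y) ^ (k + 1)) v) x u
      = N x (fderiv ℝ (fun y => ((N y) ^ k) v) x u) + fderiv ℝ N x u (((N x) ^ k) v) := by
  have h : (fun y => ((N y) ^ (k + 1)) v) = fun y => N y (((N y) ^ k) v) := by
    funext y; rw [pow_succ', ContinuousLinearMap.mul_apply]
  rw [h, fderiv_clm_apply (hN.differentiable (by simp : ((⊤:ℕ∞):WithTop ℕ∞) ≠ 0)).differentiableAt
    ((powvCD N hN k v).differentiable (by simp : ((⊤:ℕ∞):WithTop ℕ∞) ≠ 0)).differentiableAt]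
  simp

noncomputable def AA (N : E → E →L[ℝ] E) (k : ℕ) (x u v : E) : E :=
  fderiv ℝ (fun y => ((N y) ^ k) v) x u - fderiv ℝ (fun y => ((N y) ^ k) u) x v

lemma AA_zero (N : E → E →L[ℝ] E) (x u v : E) : AA N 0 x u v = 0 := by
  simp [AA]

lemma AA_succ (N : E → E →L[ℝ] E) (hN : ContDiff ℝ (⊤ : ℕ∞) N) (k : ℕ) (x u v : E) :
    AA N (k + 1) x u v
      = (fderiv ℝ N x u (((N x) ^ k) v) - fderiv ℝ N x v (((N x) ^ k) u))
        + N x (AA N k x u v) := by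
  simp only [AA, fderiv_pow_succ N hN, map_sub]
  abel

lemma AA_one (N : E → E →L[ℝ] E) (hN : ContDiff ℝ (⊤ : ℕ∞) N) (x u v : E) :
    AA N 1 x u v = fderiv ℝ N x u v - fderiv ℝ N x v u := by
  rw [AA_succ N hN, AA_zero]
  simp

lemma pow_app_comm (B : E →L[ℝ] E) (k : ℕ) (v : E) :
    (B ^ (k + 1)) v = (B ^ k) (B v) := by
  rw [pow_succ, ContinuousLinearMap.mul_apply]

lemma star_eq (N : E → E →L[ℝ] E) (hN : ContDiff ℝ (⊤ : ℕ∞) N)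
    (hT : ∀ X Y : E → E, ContDiff ℝ (⊤ : ℕ∞) X → ContDiff ℝ (⊤ : ℕ∞) Y →
      ∀ x, tor N X Y x = 0) (x u v : E) :
    N x (fderiv ℝ N x u v - fderiv ℝ N x v u)
      = fderiv ℝ N x (N x u) v - fderiv ℝ N x (N x v) u := by
  have hNd : DifferentiableAt ℝ N x :=
    (hN.differentiable (by simp : ((⊤:ℕ∞):WithTop ℕ∞) ≠ 0)).differentiableAt
  have h := hT (fun _ => u) (fun _ => v) contDiff_const contDiff_const x
  have ea : ∀ w : E, app N (fun _ : E => w) = fun y => N y w := fun w => rfl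
  simp only [tor, lie, ea, fderiv_const, fderiv_fun_const, Pi.zero_apply, ContinuousLinearMap.zero_apply,
    fderiv_apply_const' hNd, sub_zero, zero_sub, map_sub, map_neg, map_zero, neg_neg] at h
  have h2 := eq_neg_of_add_eq_zero_left h
  rw [neg_sub] at h2
  rw [map_sub]
  exact h2.symm
  


lemma AA_key (N : E → E →L[ℝ] E) (hN : ContDiff ℝ (⊤ : ℕ∞) N)
    (hT : ∀ X Y : E → E, ContDiff ℝ (⊤ : ℕ∞) X → ContDiff ℝ (⊤ : ℕ∞) Y →
      ∀ x, tor N X Y x = 0) :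
    ∀ (k : ℕ) (x u v : E),
      AA N (k + 2) x u v
        = AA N (k + 1) x (N x u) v + AA N (k + 1) x u (N x v)
          - AA N k x (N x u) (N x v) := by
  intro k
  induction k with
  | zero =>
    intro x u v
    rw [AA_succ N hN, AA_one N hN, AA_one N hN, AA_one N hN, AA_zero,
      star_eq N hN hT]
    simp only [pow_one]
    abel
  | succ k ih =>
    intro x u v
    rw [AA_succ N hN, ih, AA_succ N hN (k+1) x (N x u) v, AA_succ N hN (k+1) x u (N x v),
      AA_succ N hN k x (N x u) (N x v)]
    simp only [map_add, map_sub, ← pow_app_comm]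
    abel

lemma fderiv_form_apply (N : E → E →L[ℝ] E) (hN : ContDiff ℝ (⊤ : ℕ∞) N)
    (ρ : E → E →L[ℝ] ℝ) (hρ : ContDiff ℝ (⊤ : ℕ∞) ρ) (k : ℕ) (x u v : E) :
    fderiv ℝ (fun y => (ρ y).comp ((N y) ^ k)) x u v
      = ρ x (fderiv ℝ (fun y => ((N y) ^ k) v) x u) + fderiv ℝ ρ x u (((N x) ^ k) v) := by
  have hle : ((⊤:ℕ∞):WithTop ℕ∞) ≠ 0 := by simp
  have hF : DifferentiableAt ℝ (fun y => (ρ y).comp ((N y) ^ k)) x :=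
    ((hρ.clm_comp (powCD N hN k)).differentiable hle).differentiableAt
  rw [← fderiv_apply_const' hF v u]
  have he : (fun y => ((ρ y).comp ((N y) ^ k)) v) = fun y => ρ y (((N y) ^ k) v) := rfl
  rw [he, fderiv_clm_apply (hρ.differentiable hle).differentiableAt
      ((powvCD N hN k v).differentiable hle).differentiableAt]
  simp

lemma C_all (N : E → E →L[ℝ] E) (hN : ContDiff ℝ (⊤ : ℕ∞) N)
    (hT : ∀ X Y : E → E, ContDiff ℝ (⊤ : ℕ∞) X → ContDiff ℝ (⊤ : ℕ∞) Y →
      ∀ x, tor N X Y x = 0)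
    (ρ : E → E →L[ℝ] ℝ) (hρ : ContDiff ℝ (⊤ : ℕ∞) ρ)
    (hclosed : IsClosedOneForm ρ)
    (hNclosed : IsClosedOneForm fun x => (ρ x).comp (N x)) :
    ∀ (k : ℕ) (x u v : E),
      ρ x (AA N k x u v)
        = fderiv ℝ ρ x v (((N x) ^ k) u) - fderiv ℝ ρ x u (((N x) ^ k) v) := by
  have hle : ((⊤:ℕ∞):WithTop ℕ∞) ≠ 0 := by simp
  have hNd : ∀ x : E, DifferentiableAt ℝ N x :=
    fun x => (hN.differentiable hle) x
  have C0 : ∀ x u v : E, ρ x (AA N 0 x u v)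
      = fderiv ℝ ρ x v (((N x) ^ 0) u) - fderiv ℝ ρ x u (((N x) ^ 0) v) := by
    intro x u v
    rw [AA_zero]
    simp [hclosed x u v]
  have C1 : ∀ x u v : E, ρ x (AA N 1 x u v)
      = fderiv ℝ ρ x v (((N x) ^ 1) u) - fderiv ℝ ρ x u (((N x) ^ 1) v) := by
    intro x u v
    have h := hNclosed x u v
    have e1 : (fun y => (ρ y).comp (N y)) = fun y => (ρ y).comp ((N y) ^ 1) := by
      funext y; rw [pow_one]
    rw [e1, fderiv_form_apply N hN ρ hρ 1 x u v, fderiv_form_apply N hN ρ hρ 1 x v u] at h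
    simp only [pow_one] at h ⊢
    rw [fderiv_apply_const' (hNd x), fderiv_apply_const' (hNd x)] at h
    rw [AA_one N hN, map_sub]
    linarith
  suffices H : ∀ k : ℕ, (∀ x u v : E, ρ x (AA N k x u v)
      = fderiv ℝ ρ x v (((N x) ^ k) u) - fderiv ℝ ρ x u (((N x) ^ k) v)) ∧
      (∀ x u v : E, ρ x (AA N (k+1) x u v)
      = fderiv ℝ ρ x v (((N x) ^ (k+1)) u) - fderiv ℝ ρ x u (((N x) ^ (k+1)) v)) by
    exact fun k => (H k).1
  intro k
  induction k with
  | zero => exact ⟨C0, C1⟩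
  | succ k ih =>
    refine ⟨ih.2, ?_⟩
    intro x u v
    rw [AA_key N hN hT k x u v, map_sub, map_add,
      ih.2 x (N x u) v, ih.2 x u (N x v), ih.1 x (N x u) (N x v)]
    simp only [← pow_app_comm]
    linarith

theorem stmt3 (N : E → E →L[ℝ] E) (hN : ContDiff ℝ (⊤ : ℕ∞) N)
    (hT : ∀ X Y : E → E, ContDiff ℝ (⊤ : ℕ∞) X → ContDiff ℝ (⊤ : ℕ∞) Y →
      ∀ x, tor N X Y x = 0)
    (ρ : E → E →L[ℝ] ℝ) (hρ : ContDiff ℝ (⊤ : ℕ∞) ρ)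
    (hclosed : IsClosedOneForm ρ)
    (hNclosed : IsClosedOneForm fun x => (ρ x).comp (N x))
    (k : ℕ) (hk : 0 < k) :
    IsClosedOneForm (fun x => (ρ x).comp ((N x) ^ k)) ∧
      IsClosedOneForm (fun x => ((ρ x).comp ((N x) ^ k)).comp (N x)) := by
  have key : ∀ m : ℕ, IsClosedOneForm (fun x => (ρ x).comp ((N x) ^ m)) := by
    intro m x u v
    rw [fderiv_form_apply N hN ρ hρ m x u v, fderiv_form_apply N hN ρ hρ m x v u]
    have h := C_all N hN hT ρ hρ hclosed hNclosed m x u v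
    simp only [AA, map_sub] at h
    linarith
  refine ⟨key k, ?_⟩
  have e : (fun x => ((ρ x).comp ((N x) ^ k)).comp (N x))
      = fun x => (ρ x).comp ((N x) ^ (k+1)) := by
    funext y
    rw [ContinuousLinearMap.comp_assoc,
      show ((N y) ^ k).comp (N y) = (N y) ^ (k+1) from by
        ext w; exact (pow_app_comm (N y) k w).symm]
  rw [e]
  exact key (k+1)
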